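/- The function v(x) = (1/2)(1 + cos(x₀⁻¹(x))), where x₀(θ) = (θ + sin θ)/2 maps [0, π] bijectively onto [0, π/2], is strictly decreasing and concave on [0, π/2]; in particular its second derivative equals -2/(1 + cos(x₀⁻¹(x)))² for 0 < x < π/2. -/

import Mathlib

open Real Set

theorem curve_decreasing_concave (g : ℝ → ℝ)
    (hg1 : ∀ θ ∈ Set.Icc (0:ℝ) π, g ((θ + Real.sin θ)/2) = θ)
    (hg2 : ∀ x ∈ Set.Icc (0:ℝ) (π/2), (g x + Real.sin (g x))/2 = x)
    (hg3 : ∀ x ∈ Set.Icc (0:ℝ) (π/2), g x ∈ Set.Icc (0:ℝ) π) :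
    StrictAntiOn (fun x : ℝ => (1 + Real.cos (g x))/2) (Set.Icc 0 (π/2)) ∧
    ConcaveOn ℝ (Set.Icc 0 (π/2)) (fun x : ℝ => (1 + Real.cos (g x))/2) ∧
    ∀ x ∈ Set.Ioo (0:ℝ) (π/2),
      deriv (deriv (fun x : ℝ => (1 + Real.cos (g x))/2)) x
        = -2 / (1 + Real.cos (g x))^2 := by
  have hπ : (0:ℝ) < π := Real.pi_pos
  have hπ2 : (0:ℝ) < π/2 := by linarith
  -- monotonicity of θ ↦ θ + sin θ
  have hdsum : ∀ θ:ℝ, HasDerivAt (fun t : ℝ => t + Real.sin t) (1 + Real.cos θ) θ :=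
    fun θ => (hasDerivAt_id θ).add (Real.hasDerivAt_sin θ)
  have hmono : Monotone (fun t : ℝ => t + Real.sin t) := by
    apply monotone_of_deriv_nonneg (fun θ => (hdsum θ).differentiableAt)
    intro θ
    rw [(hdsum θ).deriv]
    nlinarith [Real.neg_one_le_cos θ]
  -- g is strictly monotone on Icc 0 (π/2)
  have hgmono : StrictMonoOn g (Set.Icc 0 (π/2)) := by
    intro x hx y hy hxy
    by_contra hle
    push_neg at hle
    have h1 : g y + Real.sin (g y) ≤ g x + Real.sin (g x) := hmono hle
    have h2 := hg2 x hx
    have h3 := hg2 y hy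
    linarith
  -- image facts
  have hmem_h : ∀ θ ∈ Set.Icc (0:ℝ) π, (θ + Real.sin θ)/2 ∈ Set.Icc (0:ℝ) (π/2) := by
    intro θ hθ
    have h0 : (0:ℝ) + Real.sin 0 ≤ θ + Real.sin θ := hmono hθ.1
    have h1 : θ + Real.sin θ ≤ π + Real.sin π := hmono hθ.2
    simp [Real.sin_pi] at h0 h1
    constructor <;> [linarith; linarith]
  have himg : g '' Set.Icc 0 (π/2) = Set.Icc (0:ℝ) π := by
    apply Set.Subset.antisymm
    · rintro _ ⟨x, hx, rfl⟩; exact hg3 x hx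
    · intro θ hθ
      exact ⟨(θ + Real.sin θ)/2, hmem_h θ hθ, hg1 θ hθ⟩
  have hg0 : g 0 = 0 := by
    have := hg1 0 ⟨le_refl 0, hπ.le⟩
    simpa using this
  have hgπ : g (π/2) = π := by
    have := hg1 π ⟨hπ.le, le_refl π⟩
    rw [Real.sin_pi] at this
    norm_num at this
    exact this
  -- interior membership
  have hIoo : ∀ x ∈ Set.Ioo (0:ℝ) (π/2), g x ∈ Set.Ioo (0:ℝ) π := by
    intro x hx
    have hx' : x ∈ Set.Icc (0:ℝ) (π/2) := ⟨hx.1.le, hx.2.le⟩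
    have h3 := hg3 x hx'
    have h2 := hg2 x hx'
    constructor
    · rcases lt_or_eq_of_le h3.1 with h | h
      · exact h
      · exfalso; rw [← h] at h2; simp at h2; linarith [hx.1, h2]
    · rcases lt_or_eq_of_le h3.2 with h | h
      · exact h
      · exfalso; rw [h, Real.sin_pi] at h2; norm_num at h2; linarith [hx.2]
  have hcos_pos : ∀ θ ∈ Set.Ioo (0:ℝ) π, 0 < 1 + Real.cos θ := by
    intro θ hθ
    have := Real.strictAntiOn_cos ⟨hθ.1.le, hθ.2.le⟩ ⟨hπ.le, le_refl π⟩ hθ.2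
    rw [Real.cos_pi] at this
    linarith
  -- continuity of g
  have hcontAt : ∀ x ∈ Set.Ioo (0:ℝ) (π/2), ContinuousAt g x := by
    intro x hx
    apply hgmono.continuousAt_of_image_mem_nhds (Icc_mem_nhds hx.1 hx.2)
    rw [himg]
    exact Icc_mem_nhds (hIoo x hx).1 (hIoo x hx).2
  have hcontg : ContinuousOn g (Set.Icc 0 (π/2)) := by
    intro x hx
    rcases eq_or_lt_of_le hx.1 with h0 | h0
    · subst h0
      apply ContinuousWithinAt.mono _ (Set.Icc_subset_Ici_self)
      apply hgmono.continuousWithinAt_right_of_image_mem_nhdsWithin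
      · exact Icc_mem_nhdsGE_of_mem ⟨le_refl _, hπ2⟩
      · rw [himg, hg0]
        exact Icc_mem_nhdsGE_of_mem ⟨le_refl _, hπ⟩
    rcases eq_or_lt_of_le hx.2 with h1 | h1
    · rw [h1]
      apply ContinuousWithinAt.mono _ (Set.Icc_subset_Iic_self)
      apply hgmono.continuousWithinAt_left_of_image_mem_nhdsWithin
      · exact Icc_mem_nhdsLE_of_mem ⟨hπ2, le_refl _⟩
      · rw [himg, hgπ]
        exact Icc_mem_nhdsLE_of_mem ⟨hπ, le_refl _⟩
    · exact (hcontAt x ⟨h0, h1⟩).continuousWithinAt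
  -- derivative of g
  have hgd : ∀ x ∈ Set.Ioo (0:ℝ) (π/2), HasDerivAt g (2/(1 + Real.cos (g x))) x := by
    intro x hx
    have hne : (1 + Real.cos (g x))/2 ≠ 0 := by
      have := hcos_pos _ (hIoo x hx)
      positivity
    have hfg : ∀ᶠ y in nhds x, (fun t : ℝ => (t + Real.sin t)/2) (g y) = y := by
      filter_upwards [isOpen_Ioo.mem_nhds hx] with y hy
      exact hg2 y ⟨hy.1.le, hy.2.le⟩
    have hf : HasDerivAt (fun t : ℝ => (t + Real.sin t)/2) ((1 + Real.cos (g x))/2) (g x) :=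
      (hdsum (g x)).div_const 2
    have := HasDerivAt.of_local_left_inverse (hcontAt x hx) hf hne hfg
    rwa [show ((1 + Real.cos (g x))/2)⁻¹ = 2/(1 + Real.cos (g x)) by rw [inv_div]] at this
  set v : ℝ → ℝ := fun x => (1 + Real.cos (g x))/2 with hv
  set v1 : ℝ → ℝ := fun x => -Real.sin (g x)/(1 + Real.cos (g x)) with hv1
  set v2 : ℝ → ℝ := fun x => -2/(1 + Real.cos (g x))^2 with hv2
  have hvd : ∀ x ∈ Set.Ioo (0:ℝ) (π/2), HasDerivAt v (v1 x) x := by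
    intro x hx
    have hc : 0 < 1 + Real.cos (g x) := hcos_pos _ (hIoo x hx)
    have h1 : HasDerivAt (fun u : ℝ => Real.cos u) (-Real.sin (g x)) (g x) :=
      Real.hasDerivAt_cos (g x)
    have h2 : HasDerivAt (fun y : ℝ => Real.cos (g y))
        (-Real.sin (g x) * (2/(1 + Real.cos (g x)))) x := h1.comp x (hgd x hx)
    have h3 : HasDerivAt v ((0 + -Real.sin (g x) * (2/(1 + Real.cos (g x))))/2) x :=
      ((hasDerivAt_const x (1:ℝ)).add h2).div_const 2
    convert h3 using 1
    simp only [hv1]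
    field_simp
    ring
  have hv1d : ∀ x ∈ Set.Ioo (0:ℝ) (π/2), HasDerivAt v1 (v2 x) x := by
    intro x hx
    have hc : 0 < 1 + Real.cos (g x) := hcos_pos _ (hIoo x hx)
    have hnum : HasDerivAt (fun u : ℝ => -Real.sin u) (-Real.cos (g x)) (g x) :=
      (Real.hasDerivAt_sin (g x)).neg
    have hden : HasDerivAt (fun u : ℝ => 1 + Real.cos u) (-Real.sin (g x)) (g x) := by
      simpa using (Real.hasDerivAt_cos (g x)).const_add 1
    have hF : HasDerivAt (fun u : ℝ => -Real.sin u/(1 + Real.cos u))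
        ((-Real.cos (g x) * (1 + Real.cos (g x)) - (-Real.sin (g x)) * (-Real.sin (g x)))
          / (1 + Real.cos (g x))^2) (g x) := hnum.div hden hc.ne'
    have h2 : HasDerivAt v1
        (((-Real.cos (g x) * (1 + Real.cos (g x)) - (-Real.sin (g x)) * (-Real.sin (g x)))
          / (1 + Real.cos (g x))^2) * (2/(1 + Real.cos (g x)))) x := hF.comp x (hgd x hx)
    convert h2 using 1
    have hs := Real.sin_sq_add_cos_sq (g x)
    simp only [hv2]
    field_simp
    nlinarith [hs, hc]
  refine ⟨?_, ?_, ?_⟩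
  · -- strictly decreasing
    intro x hx y hy hxy
    have := Real.strictAntiOn_cos (hg3 x hx) (hg3 y hy) (hgmono hx hy hxy)
    show (1 + Real.cos (g y))/2 < (1 + Real.cos (g x))/2
    linarith
  · -- concave
    apply concaveOn_of_hasDerivWithinAt2_nonpos (convex_Icc 0 (π/2)) _
      (f' := v1) (f'' := v2)
    · intro x hx
      rw [interior_Icc] at hx
      exact (hvd x hx).hasDerivWithinAt
    · intro x hx
      rw [interior_Icc] at hx
      exact (hv1d x hx).hasDerivWithinAt
    · intro x hx
      rw [interior_Icc] at hx
      have hc : 0 < 1 + Real.cos (g x) := hcos_pos _ (hIoo x hx)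
      have : (0:ℝ) < (1 + Real.cos (g x))^2 := by positivity
      simp only [hv2]
      apply div_nonpos_of_nonpos_of_nonneg <;> linarith
    · exact (continuousOn_const.add
        (Real.continuous_cos.comp_continuousOn hcontg)).div_const 2
  · -- second derivative
    intro x hx
    have heq : deriv v =ᶠ[nhds x] v1 := by
      filter_upwards [isOpen_Ioo.mem_nhds hx] with y hy
      exact (hvd y hy).deriv
    calc deriv (deriv v) x = deriv v1 x := heq.deriv_eq
    _ = v2 x := (hv1d x hx).deriv
    _ = -2 / (1 + Real.cos (g x))^2 := rfl
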